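/- For every λ > 0 and all a, c ∈ ℝ, ∫_a^∞ ( 1 − Φ(λ + (c − z)/(2λ)) ) e^{−z} dz = e^{−a} + e^{−c} − Φ(λ + (a−c)/(2λ)) e^{−c} − Φ(λ − (a−c)/(2λ)) e^{−a}. -/

import Mathlib

open MeasureTheory Filter Real Set Topology

/-- Standard normal density. -/
noncomputable def stdPdf (t : ℝ) : ℝ := (Real.sqrt (2 * Real.pi))⁻¹ * Real.exp (-(t ^ 2) / 2)

/-- Standard normal CDF. -/
noncomputable def stdCdf (x : ℝ) : ℝ := ∫ t in Set.Iic x, stdPdf t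

lemma stdPdf_nonneg (t : ℝ) : 0 ≤ stdPdf t := by
  unfold stdPdf; positivity

lemma continuous_stdPdf : Continuous stdPdf := by
  unfold stdPdf
  fun_prop

lemma integrable_stdPdf : Integrable stdPdf := by
  have h : Integrable (fun t : ℝ => Real.exp (-(1/2 : ℝ) * t ^ 2)) :=
    integrable_exp_neg_mul_sq (by norm_num)
  have := h.const_mul (Real.sqrt (2 * Real.pi))⁻¹
  refine this.congr (Eventually.of_forall fun t => ?_)
  unfold stdPdf; ring_nf

lemma integral_stdPdf : ∫ t, stdPdf t = 1 := by
  have h : ∫ t : ℝ, Real.exp (-(1/2 : ℝ) * t ^ 2) = Real.sqrt (Real.pi / (1/2)) :=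
    integral_gaussian (1/2)
  have h2 : ∫ t, stdPdf t = (Real.sqrt (2 * Real.pi))⁻¹ * ∫ t : ℝ, Real.exp (-(1/2:ℝ) * t ^ 2) := by
    rw [← integral_const_mul]
    congr 1 with t
    unfold stdPdf; ring_nf
  rw [h2, h]
  have : Real.pi / (1/2) = 2 * Real.pi := by ring
  rw [this, inv_mul_cancel₀]
  positivity

lemma hasDerivAt_stdCdf (x : ℝ) : HasDerivAt stdCdf (stdPdf x) x := by
  have key : ∀ y : ℝ, stdCdf y = stdCdf 0 + ∫ t in (0:ℝ)..y, stdPdf t := by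
    intro y
    unfold stdCdf
    rw [← intervalIntegral.integral_Iic_sub_Iic (integrable_stdPdf.integrableOn)
      (integrable_stdPdf.integrableOn)]
    ring
  have h1 : HasDerivAt (fun y => stdCdf 0 + ∫ t in (0:ℝ)..y, stdPdf t) (stdPdf x) x := by
    have h0 : HasDerivAt (fun u => ∫ t in (0:ℝ)..u, stdPdf t) (stdPdf x) x := by
      exact intervalIntegral.integral_hasDerivAt_right (integrable_stdPdf.intervalIntegrable)
        (continuous_stdPdf.stronglyMeasurableAtFilter _ _) continuous_stdPdf.continuousAt
    exact h0.const_add (stdCdf 0)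
  exact h1.congr_of_eventuallyEq (Eventually.of_forall key)

lemma continuous_stdCdf : Continuous stdCdf :=
  continuous_iff_continuousAt.2 fun x => (hasDerivAt_stdCdf x).continuousAt

lemma stdCdf_nonneg (x : ℝ) : 0 ≤ stdCdf x :=
  integral_nonneg fun t => stdPdf_nonneg t

lemma stdCdf_le_one (x : ℝ) : stdCdf x ≤ 1 := by
  rw [← integral_stdPdf]
  apply setIntegral_le_integral integrable_stdPdf
  exact Eventually.of_forall fun t => stdPdf_nonneg t

lemma tendsto_stdCdf_atTop : Tendsto stdCdf atTop (𝓝 1) := by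
  have h : Tendsto (fun x : ℝ => ∫ t in Iic x, stdPdf t) atTop
      (𝓝 (∫ t in ⋃ x : ℝ, Iic x, stdPdf t)) := by
    apply tendsto_setIntegral_of_monotone (fun x => measurableSet_Iic)
      (fun a b hab => Iic_subset_Iic.2 hab)
    exact integrable_stdPdf.integrableOn
  have hU : (⋃ x : ℝ, Iic x) = univ := Set.iUnion_Iic
  rw [hU] at h
  exact (by simpa [Measure.restrict_univ, integral_stdPdf] using h :
    Tendsto (fun x : ℝ => ∫ t in Iic x, stdPdf t) atTop (𝓝 1))

lemma stdCdf_neg (x : ℝ) : stdCdf (-x) = 1 - stdCdf x := by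
  have heven : ∀ t : ℝ, stdPdf (-t) = stdPdf t := by
    intro t; unfold stdPdf; ring_nf
  have h1 : stdCdf (-x) = ∫ t in Ioi x, stdPdf t := by
    unfold stdCdf
    rw [← integral_comp_neg_Ioi]
    simp_rw [heven]
  have h2 := intervalIntegral.integral_Iic_add_Ioi (b := x)
    integrable_stdPdf.integrableOn integrable_stdPdf.integrableOn
  rw [integral_stdPdf] at h2
  rw [h1]
  unfold stdCdf
  linarith

lemma tendsto_stdCdf_atBot : Tendsto stdCdf atBot (𝓝 0) := by
  have h : Tendsto (fun x : ℝ => 1 - stdCdf x) atTop (𝓝 0) := by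
    have := tendsto_stdCdf_atTop.const_sub 1
    simpa using this
  have h2 : Tendsto (fun x : ℝ => stdCdf (-x)) atTop (𝓝 0) := by
    simpa [stdCdf_neg] using h
  have h3 := h2.comp tendsto_neg_atBot_atTop
  simp only [Function.comp_def, neg_neg] at h3
  exact h3

theorem stmt17 (l : ℝ) (hl : 0 < l) (a c : ℝ) :
    ∫ z in Set.Ioi a, (1 - stdCdf (l + (c - z) / (2 * l))) * Real.exp (-z)
      = Real.exp (-a) + Real.exp (-c)
        - stdCdf (l + (a - c) / (2 * l)) * Real.exp (-c)
        - stdCdf (l - (a - c) / (2 * l)) * Real.exp (-a) := by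
  have hl' : (2 * l) ≠ 0 := by positivity
  -- antiderivative
  set H : ℝ → ℝ := fun z => stdCdf (l + (z - c) / (2 * l)) * Real.exp (-c)
      + stdCdf (l - (z - c) / (2 * l)) * Real.exp (-z) - Real.exp (-z) - Real.exp (-c) with hH
  -- key identity
  have key : ∀ z : ℝ, stdPdf (l + (z - c) / (2 * l)) * Real.exp (-c)
      = stdPdf (l - (z - c) / (2 * l)) * Real.exp (-z) := by
    intro z
    unfold stdPdf
    rw [mul_assoc, mul_assoc, ← Real.exp_add, ← Real.exp_add]
    congr 2
    field_simp
    ring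
  have hderiv : ∀ z ∈ Ici a, HasDerivAt H
      ((1 - stdCdf (l + (c - z) / (2 * l))) * Real.exp (-z)) z := by
    intro z _
    have harg1 : HasDerivAt (fun z : ℝ => l + (z - c) / (2 * l)) (1 / (2 * l)) z := by
      simpa using (((hasDerivAt_id z).sub_const c).div_const (2*l)).const_add l
    have harg2 : HasDerivAt (fun z : ℝ => l - (z - c) / (2 * l)) (-(1 / (2 * l))) z := by
      simpa [neg_div] using (((hasDerivAt_id z).sub_const c).div_const (2*l)).const_sub l
    have h1 : HasDerivAt (fun z : ℝ => stdCdf (l + (z - c) / (2 * l)))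
        (stdPdf (l + (z - c) / (2 * l)) * (1 / (2 * l))) z :=
      (hasDerivAt_stdCdf _).comp z harg1
    have h2 : HasDerivAt (fun z : ℝ => stdCdf (l - (z - c) / (2 * l)))
        (stdPdf (l - (z - c) / (2 * l)) * (-(1 / (2 * l)))) z :=
      (hasDerivAt_stdCdf _).comp z harg2
    have hexp : HasDerivAt (fun z : ℝ => Real.exp (-z)) (-Real.exp (-z)) z := by
      have := (Real.hasDerivAt_exp (-z)).comp z ((hasDerivAt_id z).neg)
      simpa [Function.comp_def] using this
    have hd : HasDerivAt H
        (stdPdf (l + (z - c) / (2 * l)) * (1 / (2 * l)) * Real.exp (-c)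
          + (stdPdf (l - (z - c) / (2 * l)) * (-(1 / (2 * l))) * Real.exp (-z)
            + stdCdf (l - (z - c) / (2 * l)) * (-Real.exp (-z)))
          - (-Real.exp (-z))) z := by
      rw [hH]
      exact (((h1.mul_const _).add (h2.mul hexp)).sub hexp).sub_const _
    convert hd using 1
    have hk := key z
    have harg : l + (c - z) / (2 * l) = l - (z - c) / (2 * l) := by ring_nf
    rw [harg]
    linear_combination (-(1/(2*l))) * hk
  -- integrability
  have hint : IntegrableOn
      (fun z => (1 - stdCdf (l + (c - z) / (2 * l))) * Real.exp (-z)) (Ioi a) := by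
    have hbound : IntegrableOn (fun z : ℝ => Real.exp (-(1:ℝ) * z)) (Ioi a) :=
      exp_neg_integrableOn_Ioi a one_pos
    apply Integrable.mono hbound
    · apply Continuous.aestronglyMeasurable
      exact (continuous_const.sub (continuous_stdCdf.comp (by fun_prop))).mul (by fun_prop)
    · refine Eventually.of_forall fun z => ?_
      have h0 : 0 ≤ 1 - stdCdf (l + (c - z) / (2 * l)) := by
        linarith [stdCdf_le_one (l + (c - z) / (2 * l))]
      have h1 : 1 - stdCdf (l + (c - z) / (2 * l)) ≤ 1 := by
        linarith [stdCdf_nonneg (l + (c - z) / (2 * l))]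
      rw [Real.norm_eq_abs, Real.norm_eq_abs,
        abs_of_nonneg (mul_nonneg h0 (Real.exp_pos _).le),
        abs_of_nonneg (Real.exp_pos _).le]
      calc (1 - stdCdf (l + (c - z) / (2 * l))) * Real.exp (-z)
          ≤ 1 * Real.exp (-z) := mul_le_mul_of_nonneg_right h1 (Real.exp_pos _).le
        _ = Real.exp (-1 * z) := by rw [one_mul]; norm_num
  -- limit at infinity
  have hlim : Tendsto H atTop (𝓝 0) := by
    have ht1 : Tendsto (fun z : ℝ => l + (z - c) / (2 * l)) atTop atTop := by
      apply tendsto_atTop_add_const_left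
      exact (tendsto_atTop_add_const_right _ (-c) tendsto_id).atTop_div_const (by positivity)
    have ht2 : Tendsto (fun z : ℝ => l - (z - c) / (2 * l)) atTop atBot := by
      apply tendsto_atBot_add_const_left
      exact tendsto_neg_atBot_iff.2
        ((tendsto_atTop_add_const_right _ (-c) tendsto_id).atTop_div_const (by positivity))
    have hA : Tendsto (fun z : ℝ => stdCdf (l + (z - c) / (2 * l)) * Real.exp (-c))
        atTop (𝓝 (1 * Real.exp (-c))) :=
      (tendsto_stdCdf_atTop.comp ht1).mul_const _
    have hexp0 : Tendsto (fun z : ℝ => Real.exp (-z)) atTop (𝓝 0) :=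
      Real.tendsto_exp_neg_atTop_nhds_zero
    have hB : Tendsto (fun z : ℝ => stdCdf (l - (z - c) / (2 * l)) * Real.exp (-z))
        atTop (𝓝 (0 * 0)) :=
      (tendsto_stdCdf_atBot.comp ht2).mul hexp0
    have : Tendsto H atTop
        (𝓝 (1 * Real.exp (-c) + 0 * 0 - 0 - Real.exp (-c))) :=
      ((hA.add hB).sub hexp0).sub_const _
    simpa using this
  have := integral_Ioi_of_hasDerivAt_of_tendsto' hderiv hint hlim
  rw [this, hH]
  simp only
  ring
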